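/- For every σ > 0 and r > 0 there exists a constant κ = κ(σ, r) > 0 such that the following holds for every signed CSBM instance (any N, C, equal-class-size labeling y, and p, q ∈ (0,1)) whose expected degree satisfies d̄ ≥ κ · log N: with probability at least 1 − 2N^{−r}, the ℓ2 operator norm of the deviation of the signed adjacency matrix from its expectation satisfies ‖A − Ā‖ ≤ σ · d̄, where Ā ∈ ℝ^{N×N} is the expectation matrix given by Ā_{ij} = p if y_i = y_j and Ā_{ij} = −q if y_i ≠ y_j. -/

import Mathlib

open MeasureTheory

/-- Index type for unordered pairs `(i, j)` with `i ≤ j` over `Fin N`. -/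
abbrev PairIdx (N : ℕ) : Type := {ij : Fin N × Fin N // ij.1 ≤ ij.2}

/-- Bernoulli measure on `Bool` with success probability `p`. -/
noncomputable def bernoulliMeasure (p : ℝ) : Measure Bool :=
  ENNReal.ofReal p • Measure.dirac true +
    ENNReal.ofReal (1 - p) • Measure.dirac false

/-- The signed CSBM measure: the product over all pairs `i ≤ j` of Bernoulli
measures with parameter `p` for intra-class pairs and `q` for inter-class pairs. -/
noncomputable def csbmMeasure (N C : ℕ) (y : Fin N → Fin C) (p q : ℝ) :
    Measure (PairIdx N → Bool) :=
  Measure.pi fun ij =>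
    bernoulliMeasure (if y ij.val.1 = y ij.val.2 then p else q)

/-- The random signed adjacency matrix of the signed CSBM. -/
noncomputable def csbmMatrix (N C : ℕ) (y : Fin N → Fin C)
    (ω : PairIdx N → Bool) : Matrix (Fin N) (Fin N) ℝ :=
  fun i j =>
    if h : i ≤ j then
      (if ω ⟨(i, j), h⟩ then (if y i = y j then 1 else -1) else 0)
    else
      (if ω ⟨(j, i), (le_total i j).resolve_left h⟩ then (if y i = y j then 1 else -1) else 0)

/-- The expected degree `d̄ = (N/C)·p + (N − N/C)·q`. -/
noncomputable def expectedDegree (N C : ℕ) (p q : ℝ) : ℝ :=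
  ((N : ℝ) / C) * p + ((N : ℝ) - (N : ℝ) / C) * q

/-- The expectation matrix `Ā` with `Ā i j = p` if `y i = y j` and `-q` otherwise. -/
noncomputable def csbmExpectedMatrix (N C : ℕ) (y : Fin N → Fin C) (p q : ℝ) :
    Matrix (Fin N) (Fin N) ℝ :=
  fun i j => if y i = y j then p else -q

/-- The ℓ2 operator (spectral) norm of a real square matrix. -/
noncomputable def l2OpNorm {N : ℕ} (M : Matrix (Fin N) (Fin N) ℝ) : ℝ :=
  ‖Matrix.toEuclideanCLM (𝕜 := ℝ) M‖

namespace CSBM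

open Finset Matrix

variable {N : ℕ}

/-! ### Sorted pairs -/

def sortPair (i j : Fin N) : PairIdx N :=
  if h : i ≤ j then ⟨(i, j), h⟩ else ⟨(j, i), le_of_not_ge h⟩

lemma sortPair_symm (i j : Fin N) : sortPair i j = sortPair j i := by
  unfold sortPair
  rcases lt_trichotomy i j with h | rfl | h
  · rw [dif_pos h.le, dif_neg (not_le.mpr h)]
  · rfl
  · rw [dif_neg (not_le.mpr h), dif_pos h.le]

lemma sortPair_eq_cases {u v u' v' : Fin N} (h : sortPair u v = sortPair u' v') :
    (u' = u ∧ v' = v) ∨ (u' = v ∧ v' = u) := by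
  unfold sortPair at h
  split_ifs at h <;>
  · simp only [Subtype.mk.injEq, Prod.mk.injEq] at h
    tauto

lemma ite_sortPair {α γ : Type*} [DecidableEq γ] (yy : Fin N → γ) (A B : α) (u v : Fin N) :
    (if yy (sortPair u v).1.1 = yy (sortPair u v).1.2 then A else B) =
      if yy u = yy v then A else B := by
  unfold sortPair
  by_cases h : u ≤ v
  · rw [dif_pos h]
  · rw [dif_neg h]
    exact if_congr eq_comm rfl rfl

/-! ### Walks -/

section Walks

variable {L : ℕ}

def wpos (a : Fin N) (f : Fin L → Fin N) : Fin (L + 1) → Fin N := Fin.cons a f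

def wedge (a : Fin N) (f : Fin L → Fin N) (t : Fin L) : PairIdx N :=
  sortPair (wpos a f t.castSucc) (f t)

def prevVis (a : Fin N) (f : Fin L → Fin N) (t : Fin L) : Finset (Fin N) :=
  insert a ((Finset.univ.filter (fun s => s < t)).image f)

lemma mem_prevVis_self (a : Fin N) (f : Fin L → Fin N) (t : Fin L) :
    a ∈ prevVis a f t := mem_insert_self _ _

lemma mem_prevVis_of_lt {a : Fin N} {f : Fin L → Fin N} {s t : Fin L} (h : s < t) :
    f s ∈ prevVis a f t :=
  mem_insert_of_mem (mem_image_of_mem f (by simp [h]))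

lemma prevVis_mono {a : Fin N} {f : Fin L → Fin N} {t t' : Fin L} (h : t ≤ t') :
    prevVis a f t ⊆ prevVis a f t' := by
  intro x hx
  rcases mem_insert.mp hx with rfl | hx
  · exact mem_insert_self _ _
  · obtain ⟨s, hs, rfl⟩ := mem_image.mp hx
    exact mem_prevVis_of_lt (lt_of_lt_of_le (by simpa using hs) h)

lemma card_prevVis (a : Fin N) (f : Fin L → Fin N) (t : Fin L) :
    (prevVis a f t).card ≤ L + 1 := by
  refine (card_insert_le _ _).trans ?_
  have h1 : ((univ.filter (fun s => s < t)).image f).card ≤ L :=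
    (card_image_le).trans ((card_filter_le _ _).trans (by simp))
  omega

lemma card_insert_image_le (a : Fin N) (f : Fin L → Fin N) :
    (insert a (univ.image f)).card ≤ L + 1 := by
  refine (card_insert_le _ _).trans ?_
  have h1 : (univ.image f).card ≤ L := (card_image_le).trans (by simp)
  omega

lemma wpos_castSucc_mem (a : Fin N) (f : Fin L → Fin N) (t : Fin L) :
    wpos a f t.castSucc ∈ prevVis a f t := by
  by_cases h0 : (t : ℕ) = 0
  · have ht : t.castSucc = 0 := by ext; simpa
    rw [ht]
    simp only [wpos, Fin.cons_zero]
    exact mem_prevVis_self a f t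
  · have htL : (t : ℕ) < L := t.isLt
    have hcast : t.castSucc = (⟨(t : ℕ) - 1, by omega⟩ : Fin L).succ := by
      ext; simp; omega
    rw [hcast]
    simp only [wpos, Fin.cons_succ]
    exact mem_prevVis_of_lt (by rw [Fin.lt_def]; simp; omega)

def wnew (a : Fin N) (f : Fin L → Fin N) : Finset (Fin L) :=
  univ.filter (fun t => f t ∉ prevVis a f t)

lemma wedge_ne_of_lt {a : Fin N} {f : Fin L → Fin N} {t t' : Fin L}
    (ht' : t' ∈ wnew a f) (hlt : t < t') : wedge a f t ≠ wedge a f t' := by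
  intro he
  have hm : f t' ∉ prevVis a f t' := by simpa [wnew] using ht'
  rcases sortPair_eq_cases he with ⟨h1, h2⟩ | ⟨h1, h2⟩
  · exact hm (by rw [h2]; exact mem_prevVis_of_lt hlt)
  · exact hm (by rw [h2]; exact prevVis_mono hlt.le (wpos_castSucc_mem a f t))

lemma wedge_injOn (a : Fin N) (f : Fin L → Fin N) :
    ∀ t ∈ wnew a f, ∀ t' ∈ wnew a f, wedge a f t = wedge a f t' → t = t' := by
  intro t ht t' ht' he
  rcases lt_trichotomy t t' with h | h | h
  · exact absurd he (wedge_ne_of_lt ht' h)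
  · exact h
  · exact absurd he.symm (wedge_ne_of_lt ht h)

def mult (a : Fin N) (f : Fin L → Fin N) (c : PairIdx N) : ℕ :=
  (univ.filter (fun t => wedge a f t = c)).card

lemma mult_eq_zero {a : Fin N} {f : Fin L → Fin N} {c : PairIdx N}
    (h : c ∉ univ.image (wedge a f)) : mult a f c = 0 := by
  rw [mult, Finset.card_eq_zero, Finset.filter_eq_empty_iff]
  intro t _
  exact fun he => h (he ▸ mem_image_of_mem _ (mem_univ t))

lemma mult_pos {a : Fin N} {f : Fin L → Fin N} {c : PairIdx N}
    (h : c ∈ univ.image (wedge a f)) : 1 ≤ mult a f c := by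
  obtain ⟨t, _, rfl⟩ := mem_image.mp h
  exact Finset.card_pos.mpr ⟨t, by simp⟩

lemma sum_mult (a : Fin N) (f : Fin L → Fin N) :
    ∑ c ∈ univ.image (wedge a f), mult a f c = L := by
  have := Finset.card_eq_sum_card_fiberwise
    (fun t (_ : t ∈ (univ : Finset (Fin L))) => mem_image_of_mem (wedge a f) (mem_univ t))
  simpa [mult] using this.symm

end Walks

section SnocLemmas

variable {L : ℕ}

lemma sum_snoc {V β : Type*} [Fintype V] [AddCommMonoid β] {L : ℕ}
    (h : (Fin (L + 1) → V) → β) :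
    (∑ f : Fin (L + 1) → V, h f) = ∑ z : V, ∑ f : Fin L → V, h (Fin.snoc f z) := by
  rw [← Equiv.sum_comp (Fin.snocEquiv (fun _ => V)) h, Fintype.sum_prod_type]
  rfl

lemma cons_snoc_comp {V : Type*} {L : ℕ} (a : V) (f : Fin L → V) (z : V) :
    (Fin.cons a (Fin.snoc f z) : Fin (L + 2) → V) ∘ Fin.castSucc = Fin.cons a f := by
  funext s
  refine Fin.cases ?_ (fun i => ?_) s
  · simp
  · simp only [Function.comp_apply, ← Fin.succ_castSucc, Fin.cons_succ, Fin.snoc_castSucc]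

lemma wpos_snoc (a : Fin N) (f : Fin L → Fin N) (z : Fin N) (s : Fin (L + 1)) :
    wpos a (Fin.snoc f z) s.castSucc = wpos a f s :=
  congrFun (cons_snoc_comp a f z) s

lemma prevVis_snoc_castSucc (a : Fin N) (f : Fin L → Fin N) (z : Fin N) (t : Fin L) :
    prevVis a (Fin.snoc f z) t.castSucc = prevVis a f t := by
  unfold prevVis
  congr 1
  ext x
  simp only [mem_image, mem_filter, mem_univ, true_and]
  constructor
  · rintro ⟨s, hs, rfl⟩
    have hsv : (s : ℕ) < (t : ℕ) := hs
    have hsL : (s : ℕ) < L := by omega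
    have hse : s = Fin.castSucc ⟨(s : ℕ), hsL⟩ := by ext; rfl
    refine ⟨⟨(s : ℕ), hsL⟩, by rw [Fin.lt_def]; exact hsv, ?_⟩
    conv_rhs => rw [hse]
    rw [Fin.snoc_castSucc]
  · rintro ⟨s, hs, rfl⟩
    refine ⟨s.castSucc, ?_, by rw [Fin.snoc_castSucc]⟩
    rw [Fin.lt_def]
    exact hs

lemma prevVis_snoc_last (a : Fin N) (f : Fin L → Fin N) (z : Fin N) :
    prevVis a (Fin.snoc f z) (Fin.last L) = insert a (univ.image f) := by
  unfold prevVis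
  congr 1
  ext x
  simp only [mem_image, mem_filter, mem_univ, true_and]
  constructor
  · rintro ⟨s, hs, rfl⟩
    have hsL : (s : ℕ) < L := hs
    have hse : s = Fin.castSucc ⟨(s : ℕ), hsL⟩ := by ext; rfl
    refine ⟨⟨(s : ℕ), hsL⟩, ?_⟩
    conv_rhs => rw [hse]
    rw [Fin.snoc_castSucc]
  · rintro ⟨s, rfl⟩
    exact ⟨s.castSucc, Fin.castSucc_lt_last s, by rw [Fin.snoc_castSucc]⟩

end SnocLemmas

/-! ### The core counting estimate -/

section Core

variable (ν : Fin N → Fin N → ℝ) (D : ℝ)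

lemma core (hν : ∀ u v, 0 ≤ ν u v) (hrow : ∀ u, (∑ v, ν u v) ≤ D) (hD : 0 ≤ D) :
    ∀ (L : ℕ) (K : ℝ), (L : ℝ) + 1 ≤ K → ∀ (S : Finset (Fin L)) (a : Fin N),
      (∑ f : Fin L → Fin N,
        if (∀ t : Fin L, t ∉ S → f t ∈ prevVis a f t) then
          ∏ t, (if t ∈ S then ν (wpos a f t.castSucc) (f t) else 1)
        else 0) ≤ ∏ t : Fin L, (if t ∈ S then D else K) := by
  intro L
  induction L with
  | zero =>
    intro K hK S a
    rw [Finset.sum_congr rfl (fun f _ => if_pos (fun t _ => t.elim0))]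
    simp
  | succ L ih =>
    intro K hK S a
    have hK' : (L : ℝ) + 1 ≤ K := by push_cast at hK ⊢; linarith
    have hK0 : 0 ≤ K := le_trans (by positivity) hK
    set S' : Finset (Fin L) := (univ.filter (fun t : Fin L => t.castSucc ∈ S)) with hS'
    have hmemS' : ∀ t : Fin L, t ∈ S' ↔ t.castSucc ∈ S := by intro t; simp [hS']
    have hprodnn : ∀ (f' : Fin L → Fin N),
        0 ≤ ∏ t, (if t ∈ S' then ν (wpos a f' t.castSucc) (f' t) else 1) := by
      intro f'
      refine Finset.prod_nonneg (fun t _ => ?_)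
      split_ifs
      · exact hν _ _
      · norm_num
    have key : ∀ (z : Fin N) (f' : Fin L → Fin N),
        (if (∀ t : Fin (L + 1), t ∉ S →
              (Fin.snoc f' z : Fin (L + 1) → Fin N) t ∈ prevVis a (Fin.snoc f' z) t) then
          ∏ t, (if t ∈ S then
            ν (wpos a (Fin.snoc f' z) t.castSucc) ((Fin.snoc f' z : Fin (L + 1) → Fin N) t)
          else 1)
         else 0)
        = (if ((∀ t : Fin L, t ∉ S' → f' t ∈ prevVis a f' t) ∧
              (Fin.last L ∈ S ∨ z ∈ insert a (univ.image f'))) then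
            (∏ t, (if t ∈ S' then ν (wpos a f' t.castSucc) (f' t) else 1)) *
              (if Fin.last L ∈ S then ν (wpos a f' (Fin.last L)) z else 1) else 0) := by
      intro z f'
      have hcond : (∀ t : Fin (L + 1), t ∉ S →
            (Fin.snoc f' z : Fin (L + 1) → Fin N) t ∈ prevVis a (Fin.snoc f' z) t) ↔
          ((∀ t : Fin L, t ∉ S' → f' t ∈ prevVis a f' t) ∧
            (Fin.last L ∈ S ∨ z ∈ insert a (univ.image f'))) := by
        constructor
        · intro h
          refine ⟨fun t ht => ?_, ?_⟩
          · have h2 := h t.castSucc (fun hc => ht ((hmemS' t).mpr hc))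
            rwa [Fin.snoc_castSucc, prevVis_snoc_castSucc] at h2
          · by_cases hl : Fin.last L ∈ S
            · exact Or.inl hl
            · right
              have h2 := h (Fin.last L) hl
              rwa [Fin.snoc_last, prevVis_snoc_last] at h2
        · rintro ⟨h1, h2⟩ t ht
          induction t using Fin.lastCases with
          | last =>
            rw [Fin.snoc_last, prevVis_snoc_last]
            rcases h2 with h2 | h2
            · exact absurd h2 ht
            · exact h2
          | cast i =>
            rw [Fin.snoc_castSucc, prevVis_snoc_castSucc]
            exact h1 i (fun hi => ht ((hmemS' i).mp hi))
      have hprod : (∏ t, (if t ∈ S then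
            ν (wpos a (Fin.snoc f' z) t.castSucc) ((Fin.snoc f' z : Fin (L + 1) → Fin N) t)
            else 1))
          = (∏ t, (if t ∈ S' then ν (wpos a f' t.castSucc) (f' t) else 1)) *
            (if Fin.last L ∈ S then ν (wpos a f' (Fin.last L)) z else 1) := by
        rw [Fin.prod_univ_castSucc (f := fun t : Fin (L + 1) => if t ∈ S then
          ν (wpos a (Fin.snoc f' z) t.castSucc) ((Fin.snoc f' z : Fin (L + 1) → Fin N) t)
          else 1)]
        congr 1
        · refine Finset.prod_congr rfl (fun t _ => ?_)
          rw [Fin.snoc_castSucc, wpos_snoc]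
          by_cases hts : t ∈ S'
          · rw [if_pos ((hmemS' t).mp hts), if_pos hts]
          · rw [if_neg (fun hc => hts ((hmemS' t).mpr hc)), if_neg hts]
        · rw [Fin.snoc_last, wpos_snoc]
      rw [hprod]
      exact if_congr hcond rfl rfl
    rw [sum_snoc, Fin.prod_univ_castSucc (f := fun t : Fin (L + 1) => if t ∈ S then D else K)]
    have hRHS1 : (∏ t : Fin L, (if (t.castSucc : Fin (L + 1)) ∈ S then D else K))
        = ∏ t : Fin L, (if t ∈ S' then D else K) := by
      refine Finset.prod_congr rfl (fun t _ => ?_)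
      by_cases hts : t ∈ S'
      · rw [if_pos ((hmemS' t).mp hts), if_pos hts]
      · rw [if_neg (fun hc => hts ((hmemS' t).mpr hc)), if_neg hts]
    rw [hRHS1]
    simp only [key]
    rw [Finset.sum_comm]
    by_cases hlast : Fin.last L ∈ S
    · simp only [hlast, if_true, true_or, and_true]
      calc (∑ f' : Fin L → Fin N, ∑ z : Fin N,
              if (∀ t : Fin L, t ∉ S' → f' t ∈ prevVis a f' t) then
                (∏ t, (if t ∈ S' then ν (wpos a f' t.castSucc) (f' t) else 1)) *
                  ν (wpos a f' (Fin.last L)) z else 0)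
          ≤ ∑ f' : Fin L → Fin N,
              (if (∀ t : Fin L, t ∉ S' → f' t ∈ prevVis a f' t) then
                (∏ t, (if t ∈ S' then ν (wpos a f' t.castSucc) (f' t) else 1)) else 0) * D := by
            refine Finset.sum_le_sum (fun f' _ => ?_)
            by_cases hc : (∀ t : Fin L, t ∉ S' → f' t ∈ prevVis a f' t)
            · simp only [if_pos hc]
              rw [← Finset.mul_sum]
              exact mul_le_mul_of_nonneg_left (hrow _) (hprodnn f')
            · simp only [if_neg hc]
              simp
        _ = (∑ f' : Fin L → Fin N,
              (if (∀ t : Fin L, t ∉ S' → f' t ∈ prevVis a f' t) then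
                (∏ t, (if t ∈ S' then ν (wpos a f' t.castSucc) (f' t) else 1)) else 0)) * D :=
            (Finset.sum_mul _ _ _).symm
        _ ≤ (∏ t : Fin L, (if t ∈ S' then D else K)) * D :=
            mul_le_mul_of_nonneg_right (ih K hK' S' a) hD
    · simp only [hlast, if_false, false_or, mul_one]
      calc (∑ f' : Fin L → Fin N, ∑ z : Fin N,
              if ((∀ t : Fin L, t ∉ S' → f' t ∈ prevVis a f' t) ∧
                  z ∈ insert a (univ.image f')) then
                (∏ t, (if t ∈ S' then ν (wpos a f' t.castSucc) (f' t) else 1)) else 0)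
          ≤ ∑ f' : Fin L → Fin N,
              (if (∀ t : Fin L, t ∉ S' → f' t ∈ prevVis a f' t) then
                (∏ t, (if t ∈ S' then ν (wpos a f' t.castSucc) (f' t) else 1)) else 0) * K := by
            refine Finset.sum_le_sum (fun f' _ => ?_)
            by_cases hc : (∀ t : Fin L, t ∉ S' → f' t ∈ prevVis a f' t)
            · simp only [ite_and, if_pos hc]
              rw [Fintype.sum_ite_mem]
              rw [Finset.sum_const, nsmul_eq_mul, mul_comm]
              refine mul_le_mul_of_nonneg_left ?_ (hprodnn f')
              have h2 := card_insert_image_le a f'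
              have h3 : ((insert a (univ.image f')).card : ℝ) ≤ (L : ℝ) + 1 := by exact_mod_cast h2
              push_cast at hK
              linarith
            · simp only [ite_and, if_neg hc]
              simp
        _ = (∑ f' : Fin L → Fin N,
              (if (∀ t : Fin L, t ∉ S' → f' t ∈ prevVis a f' t) then
                (∏ t, (if t ∈ S' then ν (wpos a f' t.castSucc) (f' t) else 1)) else 0)) * K :=
            (Finset.sum_mul _ _ _).symm
        _ ≤ (∏ t : Fin L, (if t ∈ S' then D else K)) * K :=
            mul_le_mul_of_nonneg_right (ih K hK' S' a) hK0

end Core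


/-! ### Master combinatorial bound -/

section Master

variable (Φ : PairIdx N → ℕ → ℝ) (nuT : PairIdx N → ℝ) (ν : Fin N → Fin N → ℝ) (D : ℝ)

lemma master (k L : ℕ) (hLk : L = 2 * k)
    (hΦ0 : ∀ c, Φ c 0 = 1) (hΦ1 : ∀ c, Φ c 1 = 0)
    (hΦ2 : ∀ c m, 2 ≤ m → |Φ c m| ≤ nuT c)
    (hnuT0 : ∀ c, 0 ≤ nuT c) (hnuT1 : ∀ c, nuT c ≤ 1)
    (hcomp : ∀ u v, nuT (sortPair u v) = ν u v)
    (hν : ∀ u v, 0 ≤ ν u v) (hrow : ∀ u, (∑ v, ν u v) ≤ D)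
    (hD : 0 ≤ D) (hKD : (L : ℝ) + 1 ≤ D) (a : Fin N) :
    (∑ f : Fin L → Fin N, |∏ c : PairIdx N, Φ c (mult a f c)|)
      ≤ 2 ^ L * (D ^ k * ((L : ℝ) + 1) ^ k) := by
  subst hLk
  set K : ℝ := ((2 * k : ℕ) : ℝ) + 1 with hKdef
  have hK0 : 0 ≤ K := by positivity
  set Tk : Finset (Finset (Fin (2 * k))) := univ.filter (fun S => S.card ≤ k) with hTk
  set term : Finset (Fin (2 * k)) → (Fin (2 * k) → Fin N) → ℝ := fun S f =>
    if (∀ t : Fin (2 * k), t ∉ S → f t ∈ prevVis a f t) then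
      ∏ t, (if t ∈ S then ν (wpos a f t.castSucc) (f t) else 1)
    else 0 with hterm
  have htermnn : ∀ S f, 0 ≤ term S f := by
    intro S f
    rw [hterm]
    dsimp only
    split_ifs
    · refine Finset.prod_nonneg (fun t _ => ?_)
      split_ifs
      · exact hν _ _
      · norm_num
    · exact le_refl 0
  have stepA : ∀ f : Fin (2 * k) → Fin N,
      |∏ c : PairIdx N, Φ c (mult a f c)| ≤ ∑ S ∈ Tk, term S f := by
    intro f
    by_cases hone : ∀ c, mult a f c ≠ 1
    · set E : Finset (PairIdx N) := univ.image (wedge a f) with hE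
      have h1 : ∏ c : PairIdx N, Φ c (mult a f c) = ∏ c ∈ E, Φ c (mult a f c) :=
        (Finset.prod_subset (subset_univ E)
          (fun c _ hc => by rw [mult_eq_zero hc, hΦ0])).symm
      have h2 : |∏ c ∈ E, Φ c (mult a f c)| ≤ ∏ c ∈ E, nuT c := by
        rw [Finset.abs_prod]
        refine Finset.prod_le_prod (fun c _ => abs_nonneg _) (fun c hcE => hΦ2 _ _ ?_)
        have hp := mult_pos hcE
        have hne := hone c
        omega
      set E' : Finset (PairIdx N) := (wnew a f).image (wedge a f) with hE'
      have hE'E : E' ⊆ E := Finset.image_subset_image (Finset.filter_subset _ _)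
      have h3 : ∏ c ∈ E, nuT c ≤ ∏ c ∈ E', nuT c := by
        rw [← Finset.prod_sdiff hE'E]
        exact mul_le_of_le_one_left (Finset.prod_nonneg fun c _ => hnuT0 c)
          (Finset.prod_le_one (fun c _ => hnuT0 c) (fun c _ => hnuT1 c))
      have h4 : ∏ c ∈ E', nuT c = ∏ t ∈ wnew a f, ν (wpos a f t.castSucc) (f t) := by
        rw [hE', Finset.prod_image (wedge_injOn a f)]
        exact Finset.prod_congr rfl (fun t _ => by rw [wedge]; exact hcomp _ _)
      have h5 : (∏ t ∈ wnew a f, ν (wpos a f t.castSucc) (f t))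
          = ∏ t, (if t ∈ wnew a f then ν (wpos a f t.castSucc) (f t) else 1) :=
        (Fintype.prod_ite_mem _ _).symm
      have hcompat : (∀ t : Fin (2 * k), t ∉ wnew a f → f t ∈ prevVis a f t) := by
        intro t ht
        by_contra hft
        exact ht (mem_filter.mpr ⟨mem_univ t, hft⟩)
      have hcard : (wnew a f).card ≤ k := by
        have hinj : E'.card = (wnew a f).card :=
          Finset.card_image_of_injOn (fun x hx y hy h => wedge_injOn a f x hx y hy h)
        have hsum := sum_mult a f
        have h2E : 2 * E.card ≤ 2 * k := by
          calc 2 * E.card = ∑ _c ∈ E, 2 := by rw [Finset.sum_const, smul_eq_mul, mul_comm]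
            _ ≤ ∑ c ∈ E, mult a f c := Finset.sum_le_sum (fun c hc => by
                have hp := mult_pos hc
                have hne := hone c
                omega)
            _ = 2 * k := hsum
        have hE'card : E'.card ≤ E.card := Finset.card_le_card hE'E
        omega
      have hmemTk : wnew a f ∈ Tk := mem_filter.mpr ⟨mem_univ _, hcard⟩
      have hterm_eq : term (wnew a f) f
          = ∏ t, (if t ∈ wnew a f then ν (wpos a f t.castSucc) (f t) else 1) := by
        rw [hterm]
        exact if_pos hcompat
      calc |∏ c : PairIdx N, Φ c (mult a f c)| = |∏ c ∈ E, Φ c (mult a f c)| := by rw [h1]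
        _ ≤ ∏ c ∈ E, nuT c := h2
        _ ≤ ∏ c ∈ E', nuT c := h3
        _ = term (wnew a f) f := by rw [h4, h5, hterm_eq]
        _ ≤ ∑ S ∈ Tk, term S f :=
            Finset.single_le_sum (fun S _ => htermnn S f) hmemTk
    · push_neg at hone
      obtain ⟨c, hc⟩ := hone
      have : (∏ c : PairIdx N, Φ c (mult a f c)) = 0 :=
        Finset.prod_eq_zero (mem_univ c) (by rw [hc]; exact hΦ1 c)
      rw [this, abs_zero]
      exact Finset.sum_nonneg (fun S _ => htermnn S f)
  have stepB : (∑ f : Fin (2 * k) → Fin N, |∏ c : PairIdx N, Φ c (mult a f c)|)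
      ≤ ∑ S ∈ Tk, ∑ f : Fin (2 * k) → Fin N, term S f := by
    rw [Finset.sum_comm]
    exact Finset.sum_le_sum (fun f _ => stepA f)
  have stepC : ∀ S ∈ Tk, (∑ f : Fin (2 * k) → Fin N, term S f) ≤ D ^ k * K ^ k := by
    intro S hS
    have hScard : S.card ≤ k := (mem_filter.mp hS).2
    have hcore := core ν D hν hrow hD (2 * k) K le_rfl S a
    refine le_trans hcore ?_
    have hsplit : (∏ t : Fin (2 * k), (if t ∈ S then D else K))
        = D ^ S.card * K ^ (2 * k - S.card) := by
      rw [← Finset.prod_sdiff (subset_univ S)]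
      have e1 : (∏ t ∈ univ \ S, (if t ∈ S then D else K)) = K ^ (2 * k - S.card) := by
        rw [Finset.prod_congr rfl (fun t ht => if_neg (mem_sdiff.mp ht).2),
          Finset.prod_const, Finset.card_sdiff_of_subset (subset_univ S), Finset.card_univ,
          Fintype.card_fin]
      have e2 : (∏ t ∈ S, (if t ∈ S then D else K)) = D ^ S.card := by
        rw [Finset.prod_congr rfl (fun t ht => if_pos ht), Finset.prod_const]
      rw [e1, e2, mul_comm]
    rw [hsplit]
    have hpow : K ^ (2 * k - S.card) = K ^ (k - S.card) * K ^ k := by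
      rw [← pow_add]
      congr 1
      omega
    rw [hpow]
    have h6 : D ^ S.card * K ^ (k - S.card) ≤ D ^ k := by
      calc D ^ S.card * K ^ (k - S.card) ≤ D ^ S.card * D ^ (k - S.card) := by
            exact mul_le_mul_of_nonneg_left (pow_le_pow_left₀ hK0 hKD _) (by positivity)
        _ = D ^ k := by rw [← pow_add]; congr 1; omega
    calc D ^ S.card * (K ^ (k - S.card) * K ^ k)
        = (D ^ S.card * K ^ (k - S.card)) * K ^ k := by ring
      _ ≤ D ^ k * K ^ k := mul_le_mul_of_nonneg_right h6 (by positivity)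
  have hTkcard : (Tk.card : ℝ) ≤ 2 ^ (2 * k) := by
    have h7 : Tk.card ≤ 2 ^ (2 * k) := by
      calc Tk.card ≤ (univ : Finset (Finset (Fin (2 * k)))).card := Finset.card_filter_le _ _
        _ = 2 ^ (2 * k) := by rw [Finset.card_univ, Fintype.card_finset, Fintype.card_fin]
    exact_mod_cast h7
  calc (∑ f : Fin (2 * k) → Fin N, |∏ c : PairIdx N, Φ c (mult a f c)|)
      ≤ ∑ S ∈ Tk, ∑ f : Fin (2 * k) → Fin N, term S f := stepB
    _ ≤ ∑ _S ∈ Tk, D ^ k * K ^ k := Finset.sum_le_sum stepC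
    _ = (Tk.card : ℝ) * (D ^ k * K ^ k) := by rw [Finset.sum_const, nsmul_eq_mul]
    _ ≤ 2 ^ (2 * k) * (D ^ k * K ^ k) :=
        mul_le_mul_of_nonneg_right hTkcard (by positivity)

end Master


/-! ### Norm and trace estimates -/

section Norm

open scoped Matrix.Norms.L2Operator

lemma l2OpNorm_eq (X : Matrix (Fin N) (Fin N) ℝ) : l2OpNorm X = ‖X‖ := rfl

lemma norm_two_pow (X : Matrix (Fin N) (Fin N) ℝ) (hX : Xᴴ = X) (j : ℕ) :
    ‖X ^ (2 ^ j)‖ = ‖X‖ ^ (2 ^ j) := by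
  induction j with
  | zero => simp
  | succ j ih =>
    have h2 : X ^ (2 ^ (j + 1)) = (X ^ (2 ^ j)) * (X ^ (2 ^ j)) := by
      rw [← pow_add]; congr 1; ring
    have hY : (X ^ (2 ^ j))ᴴ = X ^ (2 ^ j) := by rw [Matrix.conjTranspose_pow, hX]
    calc ‖X ^ (2 ^ (j + 1))‖ = ‖(X ^ (2 ^ j))ᴴ * (X ^ (2 ^ j))‖ := by rw [hY, ← h2]
      _ = ‖X ^ (2 ^ j)‖ * ‖X ^ (2 ^ j)‖ := Matrix.l2_opNorm_conjTranspose_mul_self _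
      _ = (‖X‖ ^ (2 ^ j)) * (‖X‖ ^ (2 ^ j)) := by rw [ih]
      _ = ‖X‖ ^ (2 ^ (j + 1)) := by rw [← pow_add]; congr 1; ring

lemma opNorm_le_frobenius (X : Matrix (Fin N) (Fin N) ℝ) :
    ‖X‖ ≤ Real.sqrt (∑ i, ∑ j, (X i j) ^ 2) := by
  rw [Matrix.cstar_norm_def]
  refine ContinuousLinearMap.opNorm_le_bound _ (Real.sqrt_nonneg _) (fun v => ?_)
  have happ : ∀ i, (Matrix.toEuclideanCLM (𝕜 := ℝ) X) v i = ∑ j, X i j * v j := by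
    intro i
    exact congrFun (Matrix.ofLp_toEuclideanCLM (𝕜 := ℝ) X v) i
  have hv : (∑ j, (v j) ^ 2) = ‖v‖ ^ 2 := by
    rw [EuclideanSpace.norm_eq, Real.sq_sqrt (by positivity)]
    refine Finset.sum_congr rfl (fun j _ => ?_)
    rw [Real.norm_eq_abs, sq_abs]
  have hTv : ‖(Matrix.toEuclideanCLM (𝕜 := ℝ) X) v‖ ^ 2
      ≤ (∑ i, ∑ j, (X i j) ^ 2) * ‖v‖ ^ 2 := by
    rw [EuclideanSpace.norm_eq, Real.sq_sqrt (by positivity)]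
    calc (∑ i, ‖(Matrix.toEuclideanCLM (𝕜 := ℝ) X) v i‖ ^ 2)
        = ∑ i, (∑ j, X i j * v j) ^ 2 := by
          refine Finset.sum_congr rfl (fun i _ => ?_)
          rw [happ i, Real.norm_eq_abs, sq_abs]
      _ ≤ ∑ i, (∑ j, (X i j) ^ 2) * (∑ j, (v j) ^ 2) :=
          Finset.sum_le_sum (fun i _ => Finset.sum_mul_sq_le_sq_mul_sq _ _ _)
      _ = (∑ i, ∑ j, (X i j) ^ 2) * (∑ j, (v j) ^ 2) := (Finset.sum_mul _ _ _).symm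
      _ = (∑ i, ∑ j, (X i j) ^ 2) * ‖v‖ ^ 2 := by rw [hv]
  calc ‖(Matrix.toEuclideanCLM (𝕜 := ℝ) X) v‖
      = Real.sqrt (‖(Matrix.toEuclideanCLM (𝕜 := ℝ) X) v‖ ^ 2) :=
        (Real.sqrt_sq (norm_nonneg _)).symm
    _ ≤ Real.sqrt ((∑ i, ∑ j, (X i j) ^ 2) * ‖v‖ ^ 2) := Real.sqrt_le_sqrt hTv
    _ = Real.sqrt (∑ i, ∑ j, (X i j) ^ 2) * ‖v‖ := by
        rw [Real.sqrt_mul (by positivity), Real.sqrt_sq (norm_nonneg _)]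

lemma trace_even (X : Matrix (Fin N) (Fin N) ℝ) (hX : Xᴴ = X) (j : ℕ) :
    (X ^ (2 * j)).trace = ∑ i, ∑ i', ((X ^ j) i i') ^ 2 := by
  have h2 : X ^ (2 * j) = X ^ j * X ^ j := by rw [two_mul, pow_add]
  have hsym : ∀ i i', (X ^ j) i' i = (X ^ j) i i' := by
    intro i i'
    have hYj : (X ^ j)ᴴ = X ^ j := by rw [Matrix.conjTranspose_pow, hX]
    conv_lhs => rw [← hYj]
    simp [Matrix.conjTranspose_apply]
  rw [h2, Matrix.trace]
  simp only [Matrix.diag_apply, Matrix.mul_apply]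
  refine Finset.sum_congr rfl (fun i _ => Finset.sum_congr rfl (fun i' _ => ?_))
  rw [hsym i i']
  ring

lemma trace_even_nonneg (X : Matrix (Fin N) (Fin N) ℝ) (hX : Xᴴ = X) (j : ℕ)
    {L : ℕ} (hL : L = 2 * j) : 0 ≤ (X ^ L).trace := by
  subst hL
  rw [trace_even X hX]
  positivity

lemma opNorm_pow_le_trace (X : Matrix (Fin N) (Fin N) ℝ) (hX : Xᴴ = X) (j : ℕ)
    {L : ℕ} (hL : L = 2 * 2 ^ j) : l2OpNorm X ^ L ≤ (X ^ L).trace := by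
  subst hL
  have h1 : l2OpNorm X ^ (2 * 2 ^ j) = (‖X ^ (2 ^ j)‖) ^ 2 := by
    rw [l2OpNorm_eq, norm_two_pow X hX j, ← pow_mul]
    congr 1
    ring
  rw [h1, trace_even X hX (2 ^ j)]
  calc ‖X ^ (2 ^ j)‖ ^ 2 ≤ (Real.sqrt (∑ i, ∑ i', ((X ^ (2 ^ j)) i i') ^ 2)) ^ 2 :=
        pow_le_pow_left₀ (norm_nonneg _) (opNorm_le_frobenius _) 2
    _ = ∑ i, ∑ i', ((X ^ (2 ^ j)) i i') ^ 2 := Real.sq_sqrt (by positivity)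

end Norm

/-! ### Trace as a sum over closed walks -/

section TraceWalk

def wprodM (M : Matrix (Fin N) (Fin N) ℝ) {L : ℕ} (a : Fin N) (f : Fin L → Fin N) : ℝ :=
  ∏ t : Fin L, M (wpos a f t.castSucc) (f t)

lemma wprodM_snoc (M : Matrix (Fin N) (Fin N) ℝ) {L : ℕ} (a : Fin N)
    (g : Fin L → Fin N) (b : Fin N) :
    wprodM M a (Fin.snoc g b : Fin (L + 1) → Fin N)
      = wprodM M a g * M (wpos a g (Fin.last L)) b := by
  unfold wprodM
  rw [Fin.prod_univ_castSucc (f := fun t : Fin (L + 1) =>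
    M (wpos a (Fin.snoc g b) t.castSucc) ((Fin.snoc g b : Fin (L + 1) → Fin N) t))]
  congr 1
  · refine Finset.prod_congr rfl (fun t _ => ?_)
    rw [Fin.snoc_castSucc, wpos_snoc]
  · rw [Fin.snoc_last, wpos_snoc]

lemma pow_apply_walk (M : Matrix (Fin N) (Fin N) ℝ) (L : ℕ) (a b : Fin N) :
    (M ^ (L + 1)) a b = ∑ f : Fin L → Fin N, wprodM M a (Fin.snoc f b : Fin (L + 1) → Fin N) := by
  induction L generalizing b with
  | zero =>
    rw [pow_one]
    rw [Fintype.sum_subsingleton _ (fun t : Fin 0 => t.elim0)]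
    unfold wprodM
    rw [Fin.prod_univ_one]
    rfl
  | succ L ih =>
    rw [pow_succ, Matrix.mul_apply]
    rw [Finset.sum_congr rfl (fun z _ => by rw [ih z])]
    rw [sum_snoc (fun f : Fin (L + 1) → Fin N =>
      wprodM M a (Fin.snoc f b : Fin (L + 2) → Fin N))]
    rw [Finset.sum_congr rfl (fun z (_ : z ∈ univ) => Finset.sum_congr rfl
      (fun f (_ : f ∈ univ) => wprodM_snoc M a (Fin.snoc f z) b))]
    refine Finset.sum_congr rfl (fun z _ => ?_)
    have hlastz : ∀ f : Fin L → Fin N,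
        wpos a (Fin.snoc f z : Fin (L + 1) → Fin N) (Fin.last (L + 1)) = z := by
      intro f
      have h1 : (Fin.last (L + 1)) = (Fin.last L).succ := (Fin.succ_last L).symm
      rw [h1]
      simp only [wpos]
      rw [Fin.cons_succ, Fin.snoc_last]
    rw [Finset.sum_mul]
    refine Finset.sum_congr rfl (fun f _ => ?_)
    rw [hlastz f]

end TraceWalk


/-! ### The model specifics -/

section Model

variable {C : ℕ} (y : Fin N → Fin C) (p q : ℝ)

def prp (c : PairIdx N) : ℝ := if y c.1.1 = y c.1.2 then p else q

def xi (c : PairIdx N) (b : Bool) : ℝ :=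
  (if b then (if y c.1.1 = y c.1.2 then (1 : ℝ) else -1) else 0) -
    (if y c.1.1 = y c.1.2 then p else -q)

def Phi (c : PairIdx N) (m : ℕ) : ℝ :=
  prp y p q c * (xi y p q c true) ^ m + (1 - prp y p q c) * (xi y p q c false) ^ m

def nu (u v : Fin N) : ℝ := if y u = y v then p else q

def wt (ω : PairIdx N → Bool) : ℝ :=
  ∏ c, (if ω c then prp y p q c else 1 - prp y p q c)

variable {p q}

lemma prp_nonneg (hp : 0 ≤ p) (hq : 0 ≤ q) (c : PairIdx N) : 0 ≤ prp y p q c := by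
  unfold prp; split_ifs <;> assumption

lemma prp_le_one (hp : p ≤ 1) (hq : q ≤ 1) (c : PairIdx N) : prp y p q c ≤ 1 := by
  unfold prp; split_ifs <;> assumption

lemma Phi_zero (c : PairIdx N) : Phi y p q c 0 = 1 := by
  unfold Phi; simp

lemma Phi_one (c : PairIdx N) : Phi y p q c 1 = 0 := by
  unfold Phi prp xi
  by_cases h : y c.1.1 = y c.1.2 <;> simp [h] <;> ring

lemma xi_vals (c : PairIdx N) :
    (prp y p q c = if y c.1.1 = y c.1.2 then p else q) ∧
    (xi y p q c true = if y c.1.1 = y c.1.2 then 1 - p else -(1 - q)) ∧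
    (xi y p q c false = if y c.1.1 = y c.1.2 then -p else q) := by
  refine ⟨rfl, ?_, ?_⟩ <;>
  · unfold xi
    by_cases h : y c.1.1 = y c.1.2 <;> simp [h] <;> ring

lemma aux_xbound {x : ℝ} (h0 : 0 < x) (h1 : x < 1) {m : ℕ} (hm : 2 ≤ m) :
    x * (1 - x) ^ m + (1 - x) * x ^ m ≤ x := by
  have e1 : (1 - x) ^ m ≤ 1 - x := pow_le_of_le_one (by linarith) (by linarith) (by omega)
  have e2 : x ^ m ≤ x ^ 2 := pow_le_pow_of_le_one h0.le h1.le hm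
  have e3 : x * (1 - x) ^ m ≤ x * (1 - x) := mul_le_mul_of_nonneg_left e1 h0.le
  have e4 : (1 - x) * x ^ m ≤ (1 - x) * x ^ 2 := mul_le_mul_of_nonneg_left e2 (by linarith)
  nlinarith [sq_nonneg x, h0.le, h1.le]

lemma Phi_abs_le (hp : p ∈ Set.Ioo (0 : ℝ) 1) (hq : q ∈ Set.Ioo (0 : ℝ) 1)
    (c : PairIdx N) {m : ℕ} (hm : 2 ≤ m) : |Phi y p q c m| ≤ prp y p q c := by
  obtain ⟨hp0, hp1⟩ := hp
  obtain ⟨hq0, hq1⟩ := hq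
  obtain ⟨ep, et, ef⟩ := xi_vals y (p := p) (q := q) c
  unfold Phi
  rw [ep, et, ef]
  by_cases h : y c.1.1 = y c.1.2
  · simp only [if_pos h]
    calc |p * (1 - p) ^ m + (1 - p) * (-p) ^ m|
        ≤ |p * (1 - p) ^ m| + |(1 - p) * (-p) ^ m| := abs_add_le _ _
      _ = p * (1 - p) ^ m + (1 - p) * p ^ m := by
          rw [abs_mul, abs_mul, abs_pow, abs_pow, abs_neg,
            abs_of_nonneg hp0.le, abs_of_nonneg (show (0:ℝ) ≤ 1 - p by linarith)]
      _ ≤ p := aux_xbound hp0 hp1 hm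
  · simp only [if_neg h]
    calc |q * (-(1 - q)) ^ m + (1 - q) * q ^ m|
        ≤ |q * (-(1 - q)) ^ m| + |(1 - q) * q ^ m| := abs_add_le _ _
      _ = q * (1 - q) ^ m + (1 - q) * q ^ m := by
          rw [abs_mul, abs_mul, abs_pow, abs_pow, abs_neg,
            abs_of_nonneg hq0.le, abs_of_nonneg (show (0:ℝ) ≤ 1 - q by linarith)]
      _ ≤ q := aux_xbound hq0 hq1 hm

lemma prp_sortPair (u v : Fin N) : prp y p q (sortPair u v) = nu y p q u v :=
  ite_sortPair y p q u v

lemma nu_nonneg (hp : 0 ≤ p) (hq : 0 ≤ q) (u v : Fin N) : 0 ≤ nu y p q u v := by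
  unfold nu; split_ifs <;> assumption

lemma nu_row_sum (hC : C ≠ 0) (hdvd : C ∣ N)
    (hy : ∀ c : Fin C, (Finset.univ.filter (fun i => y i = c)).card = N / C) (u : Fin N) :
    (∑ v, nu y p q u v) = expectedDegree N C p q := by
  unfold nu expectedDegree
  rw [Finset.sum_ite]
  rw [Finset.sum_const, Finset.sum_const, nsmul_eq_mul, nsmul_eq_mul]
  have hc1 : (univ.filter (fun v => y u = y v)).card = N / C := by
    have he : (univ.filter (fun v => y u = y v)) = (univ.filter (fun v => y v = y u)) :=
      Finset.filter_congr (fun v _ => eq_comm)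
    rw [he]
    exact hy (y u)
  have hcsum : (univ.filter (fun v => y u = y v)).card
      + (univ.filter (fun v => ¬ y u = y v)).card = N := by
    rw [Finset.card_filter_add_card_filter_not, Finset.card_univ, Fintype.card_fin]
  have hc2 : (univ.filter (fun v => ¬ y u = y v)).card = N - N / C := by omega
  rw [hc1, hc2]
  have hdivle : N / C ≤ N := Nat.div_le_self N C
  have hcast1 : ((N / C : ℕ) : ℝ) = (N : ℝ) / (C : ℝ) :=
    Nat.cast_div hdvd (by exact_mod_cast hC)
  have hcast2 : ((N - N / C : ℕ) : ℝ) = (N : ℝ) - (N : ℝ) / (C : ℝ) := by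
    rw [Nat.cast_sub hdivle, hcast1]
  rw [hcast1, hcast2]

lemma wt_nonneg (hp0 : 0 ≤ p) (hp1 : p ≤ 1) (hq0 : 0 ≤ q) (hq1 : q ≤ 1)
    (ω : PairIdx N → Bool) : 0 ≤ wt y p q ω := by
  refine Finset.prod_nonneg (fun c _ => ?_)
  have h1 := prp_nonneg y hp0 hq0 c
  have h2 := prp_le_one y hp1 hq1 c
  split_ifs <;> linarith

lemma exp_factor (g : PairIdx N → Bool → ℝ) :
    (∑ ω : PairIdx N → Bool, wt y p q ω * ∏ c, g c (ω c))
      = ∏ c, (prp y p q c * g c true + (1 - prp y p q c) * g c false) := by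
  have h1 : ∀ ω : PairIdx N → Bool, wt y p q ω * ∏ c, g c (ω c)
      = ∏ c, ((if ω c then prp y p q c else 1 - prp y p q c) * g c (ω c)) := by
    intro ω
    rw [wt, ← Finset.prod_mul_distrib]
  rw [Finset.sum_congr rfl (fun ω _ => h1 ω)]
  have h2 := Finset.sum_prod_piFinset (univ : Finset Bool)
    (fun (c : PairIdx N) (b : Bool) => (if b then prp y p q c else 1 - prp y p q c) * g c b)
  rw [Fintype.piFinset_univ] at h2
  rw [h2]
  refine Finset.prod_congr rfl (fun c _ => ?_)
  rw [Fintype.sum_bool]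
  simp

lemma sum_wt : (∑ ω : PairIdx N → Bool, wt y p q ω) = 1 := by
  have h := exp_factor y (p := p) (q := q) (fun _ _ => 1)
  simpa using h

lemma walkprod_eq (ω : PairIdx N → Bool) (a : Fin N) {L : ℕ} (f : Fin L → Fin N) :
    (∏ t : Fin L, xi y p q (wedge a f t) (ω (wedge a f t)))
      = ∏ c, (xi y p q c (ω c)) ^ (mult a f c) := by
  rw [← Finset.prod_fiberwise univ (wedge a f)
    (fun t => xi y p q (wedge a f t) (ω (wedge a f t)))]
  refine Finset.prod_congr rfl (fun c _ => ?_)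
  rw [Finset.prod_congr rfl (fun t ht => by rw [(mem_filter.mp ht).2]), Finset.prod_const]
  rfl

lemma entry_eq (ω : PairIdx N → Bool) (i j : Fin N) :
    (csbmMatrix N C y ω - csbmExpectedMatrix N C y p q) i j
      = xi y p q (sortPair i j) (ω (sortPair i j)) := by
  by_cases h : i ≤ j
  · have hs : sortPair i j = ⟨(i, j), h⟩ := dif_pos h
    rw [Matrix.sub_apply, hs]
    unfold csbmMatrix csbmExpectedMatrix xi
    rw [dif_pos h]
  · have hs : sortPair i j = ⟨(j, i), le_of_not_ge h⟩ := dif_neg h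
    rw [Matrix.sub_apply, hs]
    unfold csbmMatrix csbmExpectedMatrix xi
    rw [dif_neg h]
    rw [show (if y j = y i then (1:ℝ) else -1) = (if y i = y j then (1:ℝ) else -1) from
      if_congr eq_comm rfl rfl,
      show (if y j = y i then p else -q) = (if y i = y j then p else -q) from
      if_congr eq_comm rfl rfl]

lemma matrix_symm (ω : PairIdx N → Bool) :
    (csbmMatrix N C y ω - csbmExpectedMatrix N C y p q)ᴴ
      = csbmMatrix N C y ω - csbmExpectedMatrix N C y p q := by
  ext i j
  rw [Matrix.conjTranspose_apply, entry_eq, entry_eq, sortPair_symm j i, star_trivial]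

lemma wprodM_eq (ω : PairIdx N → Bool) (a : Fin N) {L : ℕ} (f : Fin L → Fin N) :
    wprodM (csbmMatrix N C y ω - csbmExpectedMatrix N C y p q) a f
      = ∏ t : Fin L, xi y p q (wedge a f t) (ω (wedge a f t)) := by
  unfold wprodM
  exact Finset.prod_congr rfl (fun t _ => by rw [entry_eq]; rfl)

end Model

/-! ### Measure computations -/

section Meas

open MeasureTheory

instance bernoulli_isFinite (x : ℝ) : IsFiniteMeasure (bernoulliMeasure x) := by
  constructor
  unfold bernoulliMeasure
  rw [Measure.add_apply, Measure.smul_apply, Measure.smul_apply, smul_eq_mul, smul_eq_mul,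
    measure_univ, measure_univ, mul_one, mul_one]
  exact ENNReal.add_lt_top.mpr ⟨ENNReal.ofReal_lt_top, ENNReal.ofReal_lt_top⟩

lemma bernoulli_singleton (x : ℝ) (b : Bool) :
    bernoulliMeasure x {b} = ENNReal.ofReal (if b then x else 1 - x) := by
  unfold bernoulliMeasure
  rw [Measure.add_apply, Measure.smul_apply, Measure.smul_apply, smul_eq_mul, smul_eq_mul,
    Measure.dirac_apply, Measure.dirac_apply]
  cases b
  · simp
  · simp

variable {C : ℕ} (y : Fin N → Fin C) {p q : ℝ}

lemma singleton_measurable (ω₀ : PairIdx N → Bool) :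
    MeasurableSet ({ω₀} : Set (PairIdx N → Bool)) := by
  have h : ({ω₀} : Set (PairIdx N → Bool)) = Set.pi Set.univ (fun c => {ω₀ c}) := by
    ext g
    simp [Set.mem_pi, funext_iff]
  rw [h]
  exact MeasurableSet.univ_pi (fun c => measurableSet_singleton _)

lemma csbm_singleton (hp0 : 0 ≤ p) (hp1 : p ≤ 1) (hq0 : 0 ≤ q) (hq1 : q ≤ 1)
    (ω₀ : PairIdx N → Bool) :
    csbmMeasure N C y p q {ω₀} = ENNReal.ofReal (wt y p q ω₀) := by
  unfold csbmMeasure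
  have hset : ({ω₀} : Set (PairIdx N → Bool)) = Set.pi Set.univ (fun c => {ω₀ c}) := by
    ext g
    simp [Set.mem_pi, funext_iff]
  rw [hset, Measure.pi_pi]
  rw [Finset.prod_congr rfl (fun c _ => bernoulli_singleton _ (ω₀ c))]
  rw [← ENNReal.ofReal_prod_of_nonneg]
  · rfl
  · intro c _
    have h1 := prp_nonneg y hp0 hq0 c
    have h2 := prp_le_one y hp1 hq1 c
    unfold prp at h1 h2
    split_ifs <;> linarith

lemma csbm_finset (hp0 : 0 ≤ p) (hp1 : p ≤ 1) (hq0 : 0 ≤ q) (hq1 : q ≤ 1)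
    (S : Finset (PairIdx N → Bool)) :
    csbmMeasure N C y p q ↑S = ENNReal.ofReal (∑ ω ∈ S, wt y p q ω) := by
  have h1 : (↑S : Set (PairIdx N → Bool)) = ⋃ ω ∈ S, ({ω} : Set (PairIdx N → Bool)) := by
    ext g
    simp
  rw [h1, measure_biUnion_finset ?_ (fun ω _ => singleton_measurable ω)]
  · rw [Finset.sum_congr rfl (fun ω _ => csbm_singleton y hp0 hp1 hq0 hq1 ω),
      ← ENNReal.ofReal_sum_of_nonneg (fun ω _ => wt_nonneg y hp0 hp1 hq0 hq1 ω)]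
  · intro a _ b _ hab
    exact Set.disjoint_singleton.mpr hab

end Meas




end CSBM

set_option maxHeartbeats 1600000 in
open CSBM Finset in
theorem stmt_14 (σ r : ℝ) (hσ : 0 < σ) (hr : 0 < r) :
    ∃ κ : ℝ, 0 < κ ∧
      ∀ (N C : ℕ), 2 ≤ C → C ∣ N →
      ∀ y : Fin N → Fin C,
        (∀ c : Fin C,
          (Finset.univ.filter (fun i => y i = c)).card = N / C) →
      ∀ p q : ℝ, p ∈ Set.Ioo (0 : ℝ) 1 → q ∈ Set.Ioo (0 : ℝ) 1 →
      κ * Real.log N ≤ expectedDegree N C p q →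
      ENNReal.ofReal (1 - 2 * (N : ℝ) ^ (-r)) ≤
        csbmMeasure N C y p q
          {ω |
            l2OpNorm (csbmMatrix N C y ω - csbmExpectedMatrix N C y p q) ≤
              σ * expectedDegree N C p q} := by
  classical
  refine ⟨max 12 (46 * Real.exp (2 + r) / σ ^ 2), lt_of_lt_of_le (by norm_num) (le_max_left _ _),
    ?_⟩
  intro N C hC hdvd y hy p q hp hq hdeg
  rcases Nat.eq_zero_or_pos N with hN0 | hNpos
  · -- trivial case N = 0
    subst hN0
    haveI hIsE : IsEmpty (PairIdx 0) := ⟨fun c => c.1.1.elim0⟩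
    have hD0 : expectedDegree 0 C p q = 0 := by unfold expectedDegree; norm_num
    have huniv : {ω : PairIdx 0 → Bool |
        l2OpNorm (csbmMatrix 0 C y ω - csbmExpectedMatrix 0 C y p q) ≤
          σ * expectedDegree 0 C p q} = Set.univ := by
      refine Set.eq_univ_iff_forall.mpr (fun ω => ?_)
      have hM0 : l2OpNorm (csbmMatrix 0 C y ω - csbmExpectedMatrix 0 C y p q) = 0 := by
        unfold l2OpNorm
        haveI : Subsingleton (EuclideanSpace ℝ (Fin 0)) := ⟨fun a b => (WithLp.equiv 2 _).injective (funext (fun i => i.elim0))⟩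
        have hT : (Matrix.toEuclideanCLM (𝕜 := ℝ)
            (csbmMatrix 0 C y ω - csbmExpectedMatrix 0 C y p q)) = 0 :=
          ContinuousLinearMap.ext (fun v => Subsingleton.elim _ _)
        rw [hT, norm_zero]
      simp only [Set.mem_setOf_eq, hM0, hD0, mul_zero]
      exact le_rfl
    rw [huniv]
    have hμuniv : csbmMeasure 0 C y p q Set.univ = 1 := by
      unfold csbmMeasure
      rw [Measure.pi_univ]
      simp
    rw [hμuniv]
    have hz : ((0 : ℕ) : ℝ) ^ (-r) = 0 := by
      rw [Nat.cast_zero, Real.zero_rpow (neg_ne_zero.mpr hr.ne')]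
    rw [hz]
    norm_num
  · -- main case
    obtain ⟨hp0, hp1⟩ := hp
    obtain ⟨hq0, hq1⟩ := hq
    have hN2 : 2 ≤ N := le_trans hC (Nat.le_of_dvd hNpos hdvd)
    have hN2R : (2 : ℝ) ≤ (N : ℝ) := by exact_mod_cast hN2
    have hN1R : (1 : ℝ) ≤ (N : ℝ) := by linarith
    have hNposR : (0 : ℝ) < (N : ℝ) := by linarith
    have hlog2 : (0.6931471803 : ℝ) < Real.log 2 := Real.log_two_gt_d9
    have hlogN : Real.log 2 ≤ Real.log N := Real.log_le_log (by norm_num) hN2R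
    have hlogpos : 0 < Real.log N := by linarith
    have hone_le : 1 ≤ 1.5 * Real.log N := by nlinarith
    set D := expectedDegree N C p q with hDdef
    have hD12 : 12 * Real.log N ≤ D :=
      le_trans (mul_le_mul_of_nonneg_right (le_max_left _ _) hlogpos.le) hdeg
    have hDexp : (46 * Real.exp (2 + r) / σ ^ 2) * Real.log N ≤ D :=
      le_trans (mul_le_mul_of_nonneg_right (le_max_right _ _) hlogpos.le) hdeg
    have hDpos : 0 < D := lt_of_lt_of_le (by linarith) hD12
    -- choice of k
    set n₀ := max 1 ⌈Real.log N⌉₊ with hn₀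
    set m := Nat.clog 2 n₀ with hm
    set k := 2 ^ m with hk
    have hk1 : 1 ≤ k := Nat.one_le_pow _ _ (by norm_num)
    set L₁ := 2 * k - 1 with hL₁
    have hL : L₁ + 1 = 2 * k := by omega
    have hkln : Real.log N ≤ (k : ℝ) := by
      have h1 : Real.log N ≤ (⌈Real.log N⌉₊ : ℝ) := Nat.le_ceil _
      have h2 : (⌈Real.log N⌉₊ : ℕ) ≤ n₀ := le_max_right _ _
      have h3 : n₀ ≤ k := Nat.le_pow_clog one_lt_two n₀
      have h4 : ((⌈Real.log N⌉₊ : ℕ) : ℝ) ≤ (k : ℝ) := by exact_mod_cast le_trans h2 h3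
      linarith
    have hk2n : k ≤ 2 * n₀ := by
      by_cases h1 : n₀ ≤ 1
      · have hn1 : n₀ = 1 := le_antisymm h1 (le_max_left _ _)
        have : m = 0 := by rw [hm, hn1]; exact Nat.clog_one_right 2
        rw [hk, this]
        omega
      · push_neg at h1
        have hc1 : 0 < m := by
          rw [hm]
          exact Nat.clog_pos one_lt_two (by omega)
        have hlt := Nat.pow_pred_clog_lt_self one_lt_two h1
        have he : k = 2 * 2 ^ (m - 1) := by
          rw [hk, ← pow_succ']
          congr 1
          omega
        simp only [Nat.pred_eq_sub_one, ← hm] at hlt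
        omega
    have hkleR : (k : ℝ) ≤ 5 * Real.log N := by
      have h2 : (⌈Real.log N⌉₊ : ℝ) < Real.log N + 1 := Nat.ceil_lt_add_one hlogpos.le
      have h1 : (n₀ : ℝ) ≤ Real.log N + 1 := by
        rw [hn₀]
        push_cast
        refine max_le (by linarith) h2.le
      have h4 : (k : ℝ) ≤ 2 * (n₀ : ℝ) := by exact_mod_cast hk2n
      nlinarith
    have hk0R : (0 : ℝ) < (k : ℝ) := by exact_mod_cast hk1
    have hcastL : ((L₁ + 1 : ℕ) : ℝ) = 2 * (k : ℝ) := by exact_mod_cast congrArg (Nat.cast (R := ℝ)) hL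
    set Kr : ℝ := ((L₁ + 1 : ℕ) : ℝ) + 1 with hKr
    have hKr2k : Kr = 2 * (k : ℝ) + 1 := by rw [hKr, hcastL]
    have hKD : Kr ≤ D := by
      rw [hKr2k]
      nlinarith
    -- the key probabilistic bound
    have hrowD : ∀ u, (∑ v, nu y p q u v) ≤ D :=
      fun u => le_of_eq (nu_row_sum y (by omega) hdvd hy u)
    have hwtnn : ∀ ω, 0 ≤ wt y p q ω := wt_nonneg y hp0.le hp1.le hq0.le hq1.le
    set Bad : Finset (PairIdx N → Bool) :=
      univ.filter (fun ω => ¬ (l2OpNorm (csbmMatrix N C y ω - csbmExpectedMatrix N C y p q)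
        ≤ σ * D)) with hBad
    set Good : Finset (PairIdx N → Bool) :=
      univ.filter (fun ω => l2OpNorm (csbmMatrix N C y ω - csbmExpectedMatrix N C y p q)
        ≤ σ * D) with hGood
    have hLpow : L₁ + 1 = 2 * 2 ^ m := by rw [hL, hk]
    have hmark : ∀ ω ∈ Bad, (σ * D) ^ (L₁ + 1)
        ≤ ((csbmMatrix N C y ω - csbmExpectedMatrix N C y p q) ^ (L₁ + 1)).trace := by
      intro ω hω
      have hωB := (mem_filter.mp hω).2
      push_neg at hωB
      calc (σ * D) ^ (L₁ + 1)
          ≤ (l2OpNorm (csbmMatrix N C y ω - csbmExpectedMatrix N C y p q)) ^ (L₁ + 1) :=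
            pow_le_pow_left₀ (by positivity) hωB.le _
        _ ≤ _ := opNorm_pow_le_trace _ (matrix_symm y ω) m hLpow
    have htrnn : ∀ ω : PairIdx N → Bool,
        0 ≤ ((csbmMatrix N C y ω - csbmExpectedMatrix N C y p q) ^ (L₁ + 1)).trace :=
      fun ω => trace_even_nonneg _ (matrix_symm y ω) k hL
    have hexp : (∑ ω : PairIdx N → Bool, wt y p q ω *
          ((csbmMatrix N C y ω - csbmExpectedMatrix N C y p q) ^ (L₁ + 1)).trace)
        = ∑ a, ∑ f : Fin L₁ → Fin N,
            ∏ c, Phi y p q c (mult a (Fin.snoc f a : Fin (L₁ + 1) → Fin N) c) := by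
      have h1 : ∀ ω : PairIdx N → Bool,
          ((csbmMatrix N C y ω - csbmExpectedMatrix N C y p q) ^ (L₁ + 1)).trace
            = ∑ a, ∑ f : Fin L₁ → Fin N,
              wprodM (csbmMatrix N C y ω - csbmExpectedMatrix N C y p q) a
                (Fin.snoc f a : Fin (L₁ + 1) → Fin N) := by
        intro ω
        rw [Matrix.trace]
        exact Finset.sum_congr rfl (fun a _ => by rw [Matrix.diag_apply, pow_apply_walk])
      calc (∑ ω : PairIdx N → Bool, wt y p q ω *
            ((csbmMatrix N C y ω - csbmExpectedMatrix N C y p q) ^ (L₁ + 1)).trace)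
          = ∑ ω : PairIdx N → Bool, ∑ a, ∑ f : Fin L₁ → Fin N, wt y p q ω *
              wprodM (csbmMatrix N C y ω - csbmExpectedMatrix N C y p q) a
                (Fin.snoc f a : Fin (L₁ + 1) → Fin N) := by
            refine Finset.sum_congr rfl (fun ω _ => ?_)
            rw [h1 ω, Finset.mul_sum]
            exact Finset.sum_congr rfl (fun a _ => Finset.mul_sum _ _ _)
        _ = ∑ a, ∑ ω : PairIdx N → Bool, ∑ f : Fin L₁ → Fin N, wt y p q ω *
              wprodM (csbmMatrix N C y ω - csbmExpectedMatrix N C y p q) a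
                (Fin.snoc f a : Fin (L₁ + 1) → Fin N) := Finset.sum_comm
        _ = ∑ a, ∑ f : Fin L₁ → Fin N, ∑ ω : PairIdx N → Bool, wt y p q ω *
              wprodM (csbmMatrix N C y ω - csbmExpectedMatrix N C y p q) a
                (Fin.snoc f a : Fin (L₁ + 1) → Fin N) :=
            Finset.sum_congr rfl (fun a _ => Finset.sum_comm)
        _ = _ := by
            refine Finset.sum_congr rfl (fun a _ => Finset.sum_congr rfl (fun f _ => ?_))
            have h2 : ∀ ω ∈ (univ : Finset (PairIdx N → Bool)),
                wt y p q ω * wprodM (csbmMatrix N C y ω - csbmExpectedMatrix N C y p q) a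
                  (Fin.snoc f a : Fin (L₁ + 1) → Fin N)
                = wt y p q ω * ∏ c, (xi y p q c (ω c)) ^
                    (mult a (Fin.snoc f a : Fin (L₁ + 1) → Fin N) c) := by
              intro ω _
              rw [wprodM_eq, walkprod_eq]
            rw [Finset.sum_congr rfl h2]
            exact (exp_factor y (fun c b => (xi y p q c b) ^
              (mult a (Fin.snoc f a : Fin (L₁ + 1) → Fin N) c))).trans
              (Finset.prod_congr rfl (fun c _ => rfl))
    have hmaster : (∑ a : Fin N, ∑ g : Fin (L₁ + 1) → Fin N,
          |∏ c, Phi y p q c (mult a g c)|)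
        ≤ (N : ℝ) * (2 ^ (L₁ + 1) * (D ^ k * Kr ^ k)) := by
      calc (∑ a : Fin N, ∑ g : Fin (L₁ + 1) → Fin N, |∏ c, Phi y p q c (mult a g c)|)
          ≤ ∑ _a : Fin N, (2 ^ (L₁ + 1) * (D ^ k * Kr ^ k)) :=
            Finset.sum_le_sum (fun a _ =>
              master (Phi y p q) (prp y p q) (nu y p q) D k (L₁ + 1) hL
                (Phi_zero y) (Phi_one y)
                (fun c mm hmm => Phi_abs_le y ⟨hp0, hp1⟩ ⟨hq0, hq1⟩ c hmm)
                (prp_nonneg y hp0.le hq0.le) (prp_le_one y hp1.le hq1.le)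
                (prp_sortPair y) (nu_nonneg y hp0.le hq0.le) hrowD hDpos.le hKD a)
        _ = (N : ℝ) * (2 ^ (L₁ + 1) * (D ^ k * Kr ^ k)) := by
            rw [Finset.sum_const, Finset.card_univ, Fintype.card_fin, nsmul_eq_mul]
    have hsnocle : ∀ a : Fin N, (∑ f : Fin L₁ → Fin N,
          ∏ c, Phi y p q c (mult a (Fin.snoc f a : Fin (L₁ + 1) → Fin N) c))
        ≤ ∑ g : Fin (L₁ + 1) → Fin N, |∏ c, Phi y p q c (mult a g c)| := by
      intro a
      rw [sum_snoc (fun g : Fin (L₁ + 1) → Fin N => |∏ c, Phi y p q c (mult a g c)|)]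
      refine le_trans ?_ (Finset.single_le_sum
        (f := fun z => ∑ f : Fin L₁ → Fin N,
          |∏ c, Phi y p q c (mult a (Fin.snoc f z : Fin (L₁ + 1) → Fin N) c)|)
        (fun z _ => Finset.sum_nonneg fun f _ => abs_nonneg _) (Finset.mem_univ a))
      exact Finset.sum_le_sum (fun f _ => le_abs_self _)
    have hbound : (∑ ω ∈ Bad, wt y p q ω) * (σ * D) ^ (L₁ + 1)
        ≤ (N : ℝ) * (2 ^ (L₁ + 1) * (D ^ k * Kr ^ k)) := by
      calc (∑ ω ∈ Bad, wt y p q ω) * (σ * D) ^ (L₁ + 1)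
          = ∑ ω ∈ Bad, wt y p q ω * (σ * D) ^ (L₁ + 1) := Finset.sum_mul _ _ _
        _ ≤ ∑ ω ∈ Bad, wt y p q ω *
              ((csbmMatrix N C y ω - csbmExpectedMatrix N C y p q) ^ (L₁ + 1)).trace :=
            Finset.sum_le_sum (fun ω hω =>
              mul_le_mul_of_nonneg_left (hmark ω hω) (hwtnn ω))
        _ ≤ ∑ ω : PairIdx N → Bool, wt y p q ω *
              ((csbmMatrix N C y ω - csbmExpectedMatrix N C y p q) ^ (L₁ + 1)).trace :=
            Finset.sum_le_sum_of_subset_of_nonneg (Finset.subset_univ _)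
              (fun ω _ _ => mul_nonneg (hwtnn ω) (htrnn ω))
        _ = ∑ a, ∑ f : Fin L₁ → Fin N,
              ∏ c, Phi y p q c (mult a (Fin.snoc f a : Fin (L₁ + 1) → Fin N) c) := hexp
        _ ≤ ∑ a : Fin N, ∑ g : Fin (L₁ + 1) → Fin N, |∏ c, Phi y p q c (mult a g c)| :=
            Finset.sum_le_sum (fun a _ => hsnocle a)
        _ ≤ (N : ℝ) * (2 ^ (L₁ + 1) * (D ^ k * Kr ^ k)) := hmaster
    -- numeric endgame
    set P := ∑ ω ∈ Bad, wt y p q ω with hP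
    have hXpos : (0 : ℝ) < ((σ * D) ^ 2) ^ k := pow_pos (pow_pos (mul_pos hσ hDpos) 2) k
    have hPρ : P ≤ (N : ℝ) * (4 * Kr / (σ ^ 2 * D)) ^ k := by
      have hid : (N : ℝ) * ((4 * Kr / (σ ^ 2 * D)) ^ k) * ((σ * D) ^ 2) ^ k
          = (N : ℝ) * (2 ^ (L₁ + 1) * (D ^ k * Kr ^ k)) := by
        have hne : σ ^ 2 * D ≠ 0 := by positivity
        have h1 : (4 * Kr / (σ ^ 2 * D)) * (σ * D) ^ 2 = 4 * (D * Kr) := by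
          field_simp
          try ring
        rw [mul_assoc, ← mul_pow, h1]
        have h2 : (2 : ℝ) ^ (L₁ + 1) = 4 ^ k := by
          rw [hL, pow_mul]
          norm_num
        rw [h2]
        rw [← mul_pow, ← mul_pow]
      have hple : P * ((σ * D) ^ 2) ^ k ≤ ((N : ℝ) * (4 * Kr / (σ ^ 2 * D)) ^ k) * ((σ * D) ^ 2) ^ k := by
        rw [hid]
        have he2 : ((σ * D) ^ 2) ^ k = (σ * D) ^ (L₁ + 1) := by rw [hL, pow_mul]
        rw [he2]
        exact hbound
      exact le_of_mul_le_mul_right hple hXpos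
    have hσ2D : 46 * Real.exp (2 + r) * Real.log N ≤ σ ^ 2 * D := by
      have hσ2 : (0 : ℝ) < σ ^ 2 := by positivity
      calc 46 * Real.exp (2 + r) * Real.log N
          = σ ^ 2 * ((46 * Real.exp (2 + r) / σ ^ 2) * Real.log N) := by
            field_simp
            try ring
        _ ≤ σ ^ 2 * D := mul_le_mul_of_nonneg_left hDexp hσ2.le
    have hKrle : 4 * Kr ≤ 46 * Real.log N := by
      rw [hKr2k]
      nlinarith
    have hρle : 4 * Kr / (σ ^ 2 * D) ≤ Real.exp (-(2 + r)) := by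
      rw [div_le_iff₀ (by positivity)]
      have hE1 : Real.exp (-(2 + r)) * Real.exp (2 + r) = 1 := by
        rw [← Real.exp_add, show -(2 + r) + (2 + r) = 0 by ring, Real.exp_zero]
      calc 4 * Kr ≤ 46 * Real.log N := hKrle
        _ = Real.exp (-(2 + r)) * Real.exp (2 + r) * (46 * Real.log N) := by
            rw [hE1, one_mul]
        _ = Real.exp (-(2 + r)) * (46 * Real.exp (2 + r) * Real.log N) := by ring
        _ ≤ Real.exp (-(2 + r)) * (σ ^ 2 * D) :=
            mul_le_mul_of_nonneg_left hσ2D (Real.exp_nonneg _)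
    have hρ0 : 0 ≤ 4 * Kr / (σ ^ 2 * D) := by
      rw [hKr2k]
      positivity
    have hP2 : P ≤ (N : ℝ) * Real.exp (-(2 + r)) ^ k :=
      le_trans hPρ (mul_le_mul_of_nonneg_left (pow_le_pow_left₀ hρ0 hρle k) hNposR.le)
    have hP3 : P ≤ (N : ℝ) * (N : ℝ) ^ (-(2 + r) : ℝ) := by
      refine le_trans hP2 (mul_le_mul_of_nonneg_left ?_ hNposR.le)
      rw [← Real.exp_nat_mul, Real.rpow_def_of_pos hNposR]
      refine Real.exp_le_exp.mpr ?_
      calc (k : ℝ) * (-(2 + r)) = -((2 + r) * k) := by ring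
        _ ≤ -((2 + r) * Real.log N) := by
            refine neg_le_neg ?_
            exact mul_le_mul_of_nonneg_left hkln (by linarith)
        _ = Real.log N * (-(2 + r)) := by ring
    have hPfin : P ≤ (N : ℝ) ^ (-r) := by
      have h1 : (N : ℝ) * (N : ℝ) ^ (-(2 + r) : ℝ) = (N : ℝ) ^ (1 + -(2 + r) : ℝ) := by
        rw [Real.rpow_add hNposR, Real.rpow_one]
      have h2 : (N : ℝ) ^ (1 + -(2 + r) : ℝ) ≤ (N : ℝ) ^ (-r) :=
        Real.rpow_le_rpow_of_exponent_le hN1R (by linarith)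
      calc P ≤ (N : ℝ) * (N : ℝ) ^ (-(2 + r) : ℝ) := hP3
        _ = (N : ℝ) ^ (1 + -(2 + r) : ℝ) := h1
        _ ≤ (N : ℝ) ^ (-r) := h2
    -- conclude
    have hGoodset : {ω : PairIdx N → Bool |
        l2OpNorm (csbmMatrix N C y ω - csbmExpectedMatrix N C y p q) ≤ σ * D}
          = (↑Good : Set (PairIdx N → Bool)) := by
      ext ω
      simp [hGood]
    rw [hGoodset, csbm_finset y hp0.le hp1.le hq0.le hq1.le Good]
    refine ENNReal.ofReal_le_ofReal ?_
    have hsplit : (∑ ω ∈ Good, wt y p q ω) + (∑ ω ∈ Bad, wt y p q ω) = 1 := by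
      rw [hGood, hBad, Finset.sum_filter_add_sum_filter_not]
      exact sum_wt y
    have hNr0 : 0 ≤ (N : ℝ) ^ (-r) := Real.rpow_nonneg hNposR.le _
    have hPge : P ≥ 0 := Finset.sum_nonneg (fun ω _ => hwtnn ω)
    linarith [hPfin, hsplit]
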